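/- Let R be a ring. A condensed R-module is discrete (i.e. lies in the essential image of the constant sheaf functor from R-modules to condensed R-modules) if and only if its underlying condensed set (obtained by postcomposing with the forgetful functor from R-modules to sets) is discrete. -/
import Mathlib

universe u

open CategoryTheory Limits

/-- Let `R` be a ring. A condensed `R`-module is discrete (i.e. lies in the essential image of
the constant sheaf functor from `R`-modules to condensed `R`-modules) if and only if its
underlying condensed set (obtained by postcomposing with the forgetful functor from `R`-modules
to sets) is discrete. -/
theorem condensedMod_isDiscrete_iff_isDiscrete_forget (R : Type (u + 1)) [Ring R]
    (M : CondensedMod.{u} R) :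
    M.IsDiscrete ↔ ((Condensed.forget R).obj M).IsDiscrete := by
  exact CondensedMod.isDiscrete_iff_isDiscrete_forget R M
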